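/- Let (Ω, μ) be a probability space, η ∈ (0, 1/2], and let e_1, …, e_{2^q} be independent {0,1}-valued random variables with μ(e_i = 0) = 1/2 + η. Let n ≥ q ≥ 0 and define the (random) success probability P_S(ω) = 2^{−(n−q+1)} · ( (1/2^q) ∑_{i=1}^{2^q} (−1)^{e_i(ω)} )². Then for every t with 0 < t < 2η, μ({ω : P_S(ω) > 2^{−(n−q+1)} · (2η − t)²}) ≥ 1 − 2·exp(−2^{q−1}·t²). In other words, the lower bound P_S > P_{S,inf} := (2η − t)² / 2^{n−q+1} holds except with probability at most 2·exp(−2^{q−1} t²) over the noise. -/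

import Mathlib

open Real in
lemma aux_mgf_bound (η : ℝ) (hη : 0 < η) (hη' : η ≤ 1/2) (s : ℝ) (hs : s ≤ 0) :
    (1/2+η) * Real.exp s + (1/2-η) * Real.exp (-s) ≤ Real.exp (2*η*s + s^2/2) := by
  set M : ℝ → ℝ := fun x => (1/2+η) * Real.exp x + (1/2-η) * Real.exp (-x) with hMdef
  set Md : ℝ → ℝ := fun x => (1/2+η) * Real.exp x - (1/2-η) * Real.exp (-x) with hMddef
  have hMpos : ∀ x, 0 < M x := by
    intro x
    have h1 : 0 < (1/2+η) * Real.exp x := by positivity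
    have h2 : 0 ≤ (1/2-η) * Real.exp (-x) := by
      have : 0 ≤ 1/2 - η := by linarith
      positivity
    simp only [hMdef]; linarith
  have hexpneg : ∀ x : ℝ, HasDerivAt (fun y => Real.exp (-y)) (-Real.exp (-x)) x := by
    intro x
    simpa [Function.comp_def] using (Real.hasDerivAt_exp (-x)).comp x (hasDerivAt_neg x)
  have hM : ∀ x, HasDerivAt M (Md x) x := by
    intro x
    have := ((Real.hasDerivAt_exp x).const_mul ((1:ℝ)/2+η)).add
      ((hexpneg x).const_mul ((1:ℝ)/2-η))
    simpa [hMdef, hMddef, mul_neg, sub_eq_add_neg, Pi.add_def, Pi.neg_def] using this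
  have hMd : ∀ x, HasDerivAt Md (M x) x := by
    intro x
    have := ((Real.hasDerivAt_exp x).const_mul ((1:ℝ)/2+η)).sub
      ((hexpneg x).const_mul ((1:ℝ)/2-η))
    simpa [hMdef, hMddef, mul_neg, sub_eq_add_neg, Pi.add_def, Pi.neg_def] using this
  set f : ℝ → ℝ := fun x => 2*η*x + x^2/2 - Real.log (M x) with hfdef
  set fd : ℝ → ℝ := fun x => 2*η + x - Md x / M x with hfddef
  have hf : ∀ x, HasDerivAt f (fd x) x := by
    intro x
    have h1 : HasDerivAt (fun y : ℝ => 2*η*y) (2*η) x := by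
      simpa using (hasDerivAt_id x).const_mul (2*η)
    have h2 : HasDerivAt (fun y : ℝ => y^2/2) x x := by
      simpa using (hasDerivAt_pow 2 x).div_const 2
    have h3 : HasDerivAt (fun y => Real.log (M y)) (Md x / M x) x :=
      (hM x).log (hMpos x).ne'
    simpa [hfdef, hfddef, Pi.add_def, Pi.sub_def] using (h1.add h2).sub h3
  have hfd : ∀ x, HasDerivAt fd (1 - (M x * M x - Md x * Md x)/(M x)^2) x := by
    intro x
    have h1 : HasDerivAt (fun y : ℝ => 2*η + y) 1 x := by
      simpa using (hasDerivAt_id x).const_add (2*η)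
    have h2 : HasDerivAt (fun y => Md y / M y) ((M x * M x - Md x * Md x)/(M x)^2) x :=
      (hMd x).div (hM x) (hMpos x).ne'
    simpa [hfddef, Pi.sub_def] using h1.sub h2
  have hfd_nonneg : ∀ x, 0 ≤ 1 - (M x * M x - Md x * Md x)/(M x)^2 := by
    intro x
    rw [sub_nonneg, div_le_one (pow_pos (hMpos x) 2)]
    nlinarith [sq_nonneg (Md x)]
  have hfd_mono : Monotone fd :=
    monotone_of_deriv_nonneg (fun x => (hfd x).differentiableAt)
      (fun x => by rw [(hfd x).deriv]; exact hfd_nonneg x)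
  have hfd0 : fd 0 = 0 := by
    simp only [hfddef, hMdef, hMddef]
    norm_num [Real.exp_zero]
    ring
  have hanti : AntitoneOn f (Set.Iic 0) := by
    refine antitoneOn_of_deriv_nonpos (convex_Iic 0)
      (fun x _ => ((hf x).continuousAt).continuousWithinAt)
      (fun x _ => ((hf x).differentiableAt).differentiableWithinAt) (fun x hx => ?_)
    rw [(hf x).deriv]

    have : x < 0 := by simpa [interior_Iic] using hx
    calc fd x ≤ fd 0 := hfd_mono this.le
      _ = 0 := hfd0
  have hf0 : f 0 = 0 := by
    simp only [hfdef, hMdef]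
    norm_num [Real.exp_zero]
  have hfs : 0 ≤ f s := by
    have := hanti (Set.mem_Iic.mpr hs) (Set.mem_Iic.mpr le_rfl) hs
    rw [hf0] at this; exact this
  have hlog : Real.log (M s) ≤ 2*η*s + s^2/2 := by
    simp only [hfdef] at hfs; linarith
  calc M s = Real.exp (Real.log (M s)) := (Real.exp_log (hMpos s)).symm
    _ ≤ Real.exp (2*η*s + s^2/2) := Real.exp_le_exp.mpr hlog



open MeasureTheory ProbabilityTheory
open scoped BigOperators

/-- Concentration of the success probability: with `2^q` independent noise bits
`e_i` (`μ(e_i = 0) = 1/2 + η`, `η ∈ (0, 1/2]`) and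
`P_S(ω) = 2^{-(n-q+1)} ((1/2^q) ∑_i (-1)^{e_i(ω)})²`, for every `0 < t < 2η`
the bound `P_S > (2η - t)²/2^{n-q+1}` holds except with probability at most
`2·exp(-2^{q-1} t²)`. -/
theorem success_probability_concentration {Ω : Type*} [MeasurableSpace Ω]
    (μ : Measure Ω) [IsProbabilityMeasure μ]
    (η : ℝ) (hη : 0 < η) (hη' : η ≤ 1 / 2) (n q : ℕ) (hq : q ≤ n)
    (e : Fin (2 ^ q) → Ω → ZMod 2) (hmeas : ∀ i, Measurable (e i))
    (hindep : iIndepFun e μ)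
    (h0 : ∀ i, μ {ω | e i ω = 0} = ENNReal.ofReal (1 / 2 + η))
    (h1 : ∀ i, μ {ω | e i ω = 1} = ENNReal.ofReal (1 / 2 - η))
    (PS : Ω → ℝ)
    (hPS : ∀ ω, PS ω = ((2 : ℝ) ^ (n - q + 1))⁻¹ *
      ((1 / (2 : ℝ) ^ q) * ∑ i, (-1 : ℝ) ^ (e i ω).val) ^ 2)
    (t : ℝ) (ht : 0 < t) (ht' : t < 2 * η) :
    1 - ENNReal.ofReal (2 * Real.exp (-((2 : ℝ) ^ q / 2) * t ^ 2)) ≤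
      μ {ω | ((2 : ℝ) ^ (n - q + 1))⁻¹ * (2 * η - t) ^ 2 < PS ω} := by
  classical
  set g : ZMod 2 → ℝ := fun x => (-1 : ℝ) ^ x.val with hgdef
  set X : Fin (2 ^ q) → Ω → ℝ := fun i => g ∘ e i with hXdef
  have hXmeas : ∀ i, Measurable (X i) := fun i => (measurable_of_finite g).comp (hmeas i)
  have hXindep : iIndepFun X μ :=
    hindep.comp (fun _ => g) (fun _ => measurable_of_finite g)
  set M : ℝ → ℝ := fun s => (1/2+η) * Real.exp s + (1/2-η) * Real.exp (-s) with hMdef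
  have hq2 : (0:ℝ) ≤ 1/2 - η := by linarith
  have hInt : ∀ (i : Fin (2^q)) (s : ℝ), Integrable (fun ω => Real.exp (s * X i ω)) μ := by
    intro i s
    haveI : IsProbabilityMeasure (μ.map (e i)) :=
      Measure.isProbabilityMeasure_map (hmeas i).aemeasurable
    have hm : Measurable (fun x : ZMod 2 => Real.exp (s * g x)) := measurable_of_finite _
    exact (integrable_map_measure hm.aestronglyMeasurable (hmeas i).aemeasurable).mp
      Integrable.of_finite
  have hmgf : ∀ (i : Fin (2^q)) (s : ℝ), mgf (X i) μ s = M s := by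
    intro i s
    haveI : IsProbabilityMeasure (μ.map (e i)) :=
      Measure.isProbabilityMeasure_map (hmeas i).aemeasurable
    have hm : Measurable (fun x : ZMod 2 => Real.exp (s * g x)) := measurable_of_finite _
    have h1' : mgf (X i) μ s = ∫ x, Real.exp (s * g x) ∂(μ.map (e i)) :=
      (integral_map (hmeas i).aemeasurable hm.aestronglyMeasurable).symm
    rw [h1', integral_fintype Integrable.of_finite]
    have e0 : (μ.map (e i)) {0} = ENNReal.ofReal (1/2+η) := by
      rw [Measure.map_apply (hmeas i) (measurableSet_singleton _)]
      rw [show e i ⁻¹' {0} = {ω | e i ω = 0} from by ext ω; simp]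
      exact h0 i
    have e1 : (μ.map (e i)) {1} = ENNReal.ofReal (1/2-η) := by
      rw [Measure.map_apply (hmeas i) (measurableSet_singleton _)]
      rw [show e i ⁻¹' {1} = {ω | e i ω = 1} from by ext ω; simp]
      exact h1 i
    rw [show (Finset.univ : Finset (ZMod 2)) = {0, 1} from by decide,
      Finset.sum_pair (by decide : (0 : ZMod 2) ≠ 1), measureReal_def, measureReal_def, e0, e1,
      ENNReal.toReal_ofReal (by linarith), ENNReal.toReal_ofReal hq2]
    have v0 : ((0 : ZMod 2)).val = 0 := rfl
    have v1 : ((1 : ZMod 2)).val = 1 := rfl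
    simp only [hgdef, v0, v1, pow_zero, pow_one, smul_eq_mul, mul_one, mul_neg_one, hMdef]
  have hSapp : ∀ ω, (∑ i, X i) ω = ∑ i, (-1:ℝ) ^ (e i ω).val := by
    intro ω
    simp [hXdef, Finset.sum_apply, hgdef, Function.comp]
  have hmgfS : mgf (∑ i, X i) μ (-t) = M (-t) ^ (2^q) := by
    rw [hXindep.mgf_sum hXmeas Finset.univ]
    simp [hmgf, Finset.prod_const, Finset.card_univ]
  have hSint : Integrable (fun ω => Real.exp (-t * (∑ i, X i) ω)) μ :=
    hXindep.integrable_exp_mul_sum hXmeas (fun i _ => hInt i (-t))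
  set B : Set Ω := {ω | (∑ i, X i) ω ≤ (2:ℝ)^q * (2*η - t)} with hBdef
  have hch := measure_le_le_exp_mul_mgf (μ := μ) (X := ∑ i, X i) (t := -t)
    ((2:ℝ)^q * (2*η - t)) (neg_nonpos.mpr ht.le) hSint
  rw [hmgfS] at hch
  have hMnn : 0 ≤ M (-t) := by
    have := Real.exp_pos (-t); have := Real.exp_pos t
    simp only [hMdef, neg_neg]
    nlinarith
  have hMb : M (-t) ≤ Real.exp (2*η*(-t) + (-t)^2/2) := aux_mgf_bound η hη hη' (-t) (by linarith)
  have hpow : M (-t) ^ (2^q) ≤ Real.exp (((2^q : ℕ) : ℝ) * (2*η*(-t) + (-t)^2/2)) := by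
    rw [Real.exp_nat_mul]
    exact pow_le_pow_left₀ hMnn hMb _
  have htoReal : (μ B).toReal ≤ Real.exp (-((2:ℝ)^q / 2) * t^2) := by
    calc (μ B).toReal ≤ Real.exp (-(-t) * ((2:ℝ)^q * (2*η - t))) * M (-t) ^ (2^q) := hch
      _ ≤ Real.exp (-(-t) * ((2:ℝ)^q * (2*η - t))) *
          Real.exp (((2^q : ℕ) : ℝ) * (2*η*(-t) + (-t)^2/2)) := by
        exact mul_le_mul_of_nonneg_left hpow (Real.exp_pos _).le
      _ = Real.exp (-((2:ℝ)^q / 2) * t^2) := by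
        rw [← Real.exp_add]; congr 1; push_cast; ring
  have hSmeas : Measurable (∑ i, X i) := by
    have h := Finset.measurable_sum (Finset.univ) (fun i _ => hXmeas i)
    convert h using 1
    ext ω; simp [Finset.sum_apply]
  have hBmeas : MeasurableSet B := measurableSet_le hSmeas measurable_const
  have hμB : μ B ≤ ENNReal.ofReal (Real.exp (-((2:ℝ)^q / 2) * t^2)) :=
    (ENNReal.le_ofReal_iff_toReal_le (measure_ne_top μ B) (Real.exp_pos _).le).mpr htoReal
  have hincl : Bᶜ ⊆ {ω | ((2 : ℝ) ^ (n - q + 1))⁻¹ * (2 * η - t) ^ 2 < PS ω} := by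
    intro ω hω
    have hω' : (2:ℝ)^q * (2*η - t) < (∑ i, X i) ω := lt_of_not_ge hω
    rw [hSapp ω] at hω'
    have h2q : (0:ℝ) < 2^q := by positivity
    have key : 2*η - t < (1/(2:ℝ)^q) * ∑ i, (-1:ℝ) ^ (e i ω).val := by
      rw [one_div, inv_mul_eq_div, lt_div_iff₀ h2q]
      linarith
    have hpos : 0 < 2*η - t := by linarith
    have hsq : (2*η - t)^2 < ((1/(2:ℝ)^q) * ∑ i, (-1:ℝ) ^ (e i ω).val)^2 := by
      nlinarith
    rw [Set.mem_setOf_eq, hPS ω]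
    have hc : (0:ℝ) < ((2:ℝ)^(n-q+1))⁻¹ := by positivity
    exact mul_lt_mul_of_pos_left hsq hc
  have hE := Real.exp_pos (-((2:ℝ)^q / 2) * t^2)
  calc 1 - ENNReal.ofReal (2 * Real.exp (-((2 : ℝ) ^ q / 2) * t ^ 2))
      ≤ 1 - ENNReal.ofReal (Real.exp (-((2:ℝ)^q / 2) * t^2)) :=
        tsub_le_tsub_left (ENNReal.ofReal_le_ofReal (by linarith)) 1
    _ ≤ 1 - μ B := tsub_le_tsub_left hμB 1
    _ = μ Bᶜ := (prob_compl_eq_one_sub hBmeas).symm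
    _ ≤ _ := measure_mono hincl
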